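/- (Lemma 1 on the Toda lattice.) Let a > 0, let u(n,r,θ) be smooth in (r,θ) for each n ∈ ℤ, let g : ℝ → ℂ be differentiable and k : ℤ → ℂ, and assume the boundary condition u(n,a,θ) = 2inθ + g(θ) + k(n) for all n ∈ ℤ and θ ∈ ℝ. If φ₁ : ℤ × ℝ → ℂ (differentiable in θ) satisfies equation (V1), then the function φ₂(n,θ) = e^{2inθ + g(θ)}·φ₁(n,θ) satisfies equation (V2). -/

import Mathlib

/-- The radial partial derivative `u_r(n, a, θ)`. -/
noncomputable def uR (u : ℤ → ℝ → ℝ → ℂ) (a : ℝ) (n : ℤ) (θ : ℝ) : ℂ :=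
  deriv (fun r : ℝ => u n r θ) a

/-- The angular partial derivative `u_θ(n, a, θ)`. -/
noncomputable def uT (u : ℤ → ℝ → ℝ → ℂ) (a : ℝ) (n : ℤ) (θ : ℝ) : ℂ :=
  deriv (fun t : ℝ => u n a t) θ

/-- `ω(n, a, θ) = exp(u(n,a,θ) − u(n+1,a,θ))`. -/
noncomputable def om (u : ℤ → ℝ → ℝ → ℂ) (a : ℝ) (n : ℤ) (θ : ℝ) : ℂ :=
  Complex.exp (u n a θ - u (n + 1) a θ)

/-- `u(n,·,·)` is smooth in `(r,θ)` on `{r > 0}` for every `n`. -/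
def SmoothOnHalf (u : ℤ → ℝ → ℝ → ℂ) : Prop :=
  ∀ n : ℤ, ContDiffOn ℝ (⊤ : ℕ∞) (fun p : ℝ × ℝ => u n p.1 p.2) {p : ℝ × ℝ | 0 < p.1}

/-- Equation (V1): the θ-part, restricted to `r = a`, of the original Lax pair of the
polar two-dimensional Toda lattice. -/
def V1 (a : ℝ) (u : ℤ → ℝ → ℝ → ℂ) (φ : ℤ → ℝ → ℂ) : Prop :=
  ∀ (n : ℤ) (θ : ℝ), HasDerivAt (φ n)
    (Complex.I * a * Complex.exp (Complex.I * θ) / 2 * φ (n + 1) θ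
      - Complex.I * a / 2 * (uR u a n θ - Complex.I / a * uT u a n θ) * φ n θ
      + Complex.I * a * Complex.exp (-(Complex.I * θ)) / 2 * om u a (n - 1) θ * φ (n - 1) θ) θ

/-- Equation (V2): the θ-part, restricted to `r = a`, of the Lax pair obtained from the
reflection `θ → −θ`. -/
def V2 (a : ℝ) (u : ℤ → ℝ → ℝ → ℂ) (φ : ℤ → ℝ → ℂ) : Prop :=
  ∀ (n : ℤ) (θ : ℝ), HasDerivAt (φ n)
    (Complex.I * a * Complex.exp (-(Complex.I * θ)) / 2 * φ (n + 1) θ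
      - Complex.I * a / 2 * (uR u a n θ + Complex.I / a * uT u a n θ) * φ n θ
      + Complex.I * a * Complex.exp (Complex.I * θ) / 2 * om u a (n - 1) θ * φ (n - 1) θ) θ

/-- Equation (V3): the θ-part, restricted to `r = a`, of the Lax pair obtained from the
Kelvin transformation. -/
def V3 (a : ℝ) (u : ℤ → ℝ → ℝ → ℂ) (φ : ℤ → ℝ → ℂ) : Prop :=
  ∀ (n : ℤ) (θ : ℝ), HasDerivAt (φ n)
    (Complex.I * a * Complex.exp (Complex.I * θ) / 2 * φ (n + 1) θ
      - Complex.I * a / 2 * (-uR u a n θ + 4 * n / a - Complex.I / a * uT u a n θ) * φ n θ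
      + Complex.I * a * Complex.exp (-(Complex.I * θ)) / 2 * om u a (n - 1) θ * φ (n - 1) θ) θ

/-- Equation (V4): the θ-part, restricted to `r = a`, of the Lax pair obtained from the
reflection `ũ(n) = −u(−n)`. -/
def V4 (a : ℝ) (u : ℤ → ℝ → ℝ → ℂ) (φ : ℤ → ℝ → ℂ) : Prop :=
  ∀ (n : ℤ) (θ : ℝ), HasDerivAt (φ n)
    (Complex.I * a * Complex.exp (Complex.I * θ) / 2 * φ (n - 1) θ
      - Complex.I * a / 2 * (-uR u a n θ + Complex.I / a * uT u a n θ) * φ n θ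
      + Complex.I * a * Complex.exp (-(Complex.I * θ)) / 2 * om u a n θ * φ (n + 1) θ) θ

/-- Lemma 1 on the Toda lattice: under the boundary condition
`u(n,a,θ) = 2inθ + g(θ) + k(n)`, if `φ₁` solves (V1) then
`φ₂(n,θ) = e^{2inθ + g(θ)} φ₁(n,θ)` solves (V2). -/
theorem toda_lemma1 (a : ℝ) (ha : 0 < a) (u : ℤ → ℝ → ℝ → ℂ) (hu : SmoothOnHalf u)
    (g : ℝ → ℂ) (hg : Differentiable ℝ g) (k : ℤ → ℂ)
    (hbc : ∀ (n : ℤ) (θ : ℝ), u n a θ = 2 * Complex.I * n * θ + g θ + k n)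
    (φ₁ : ℤ → ℝ → ℂ) (hφ₁ : V1 a u φ₁) :
    V2 a u (fun n θ => Complex.exp (2 * Complex.I * n * θ + g θ) * φ₁ n θ) := by
  intro n θ
  have hR : HasDerivAt (fun t : ℝ => (t : ℂ)) 1 θ := by
    have h0 := (hasDerivAt_id θ).ofReal_comp; simp at h0; exact h0
  have hin : HasDerivAt (fun t : ℝ => 2 * Complex.I * (n : ℂ) * (t : ℂ) + g t)
      (2 * Complex.I * n + deriv g θ) θ := by
    have h1 := (hR.const_mul (2 * Complex.I * (n : ℂ))).add (hg θ).hasDerivAt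
    simp only [one_mul, mul_comm] at h1 ⊢; exact h1
  have huT : uT u a n θ = 2 * Complex.I * n + deriv g θ := by
    have hfun : (fun t : ℝ => u n a t) = fun t : ℝ => 2 * Complex.I * (n : ℂ) * (t : ℂ) + g t + k n := by
      funext t; exact hbc n t
    rw [uT, hfun]
    exact (hin.add_const (k n)).deriv
  have hE : HasDerivAt (fun t : ℝ => Complex.exp (2 * Complex.I * (n : ℂ) * (t : ℂ) + g t))
      ((2 * Complex.I * n + deriv g θ) * Complex.exp (2 * Complex.I * (n : ℂ) * (θ : ℂ) + g θ)) θ := by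
    simpa [mul_comm] using hin.cexp
  have h := hE.mul (hφ₁ n θ)
  convert h using 1
  · rfl
  · rfl
  rw [huT] at *
  push_cast
  have hane : (a:ℂ) ≠ 0 := by exact_mod_cast ha.ne'
  have hinv : (a:ℂ)⁻¹ * a = 1 := inv_mul_cancel₀ hane
  have h1 : Complex.exp (-(Complex.I*θ)) * Complex.exp (2*Complex.I*((n:ℂ)+1)*θ + g θ)
      = Complex.exp (Complex.I*θ) * Complex.exp (2*Complex.I*(n:ℂ)*θ + g θ) := by
    rw [← Complex.exp_add, ← Complex.exp_add]; ring_nf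
  have h2 : Complex.exp (Complex.I*θ) * Complex.exp (2*Complex.I*((n:ℂ)-1)*θ + g θ)
      = Complex.exp (-(Complex.I*θ)) * Complex.exp (2*Complex.I*(n:ℂ)*θ + g θ) := by
    rw [← Complex.exp_add, ← Complex.exp_add]; ring_nf
  linear_combination (Complex.I*a/2) * φ₁ (n+1) θ * h1
    + (Complex.I*a/2) * om u a (n-1) θ * φ₁ (n-1) θ * h2
    + (2*Complex.I*(n:ℂ) + deriv g θ) * Complex.exp (2*Complex.I*(n:ℂ)*θ + g θ) * φ₁ n θ * hinv
    - ((a:ℂ)*(a:ℂ)⁻¹) * (deriv g θ + 2*Complex.I*(n:ℂ)) * Complex.exp (2*Complex.I*(n:ℂ)*θ + g θ) * φ₁ n θ * Complex.I_sq
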